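/- Let H₁, …, H_k ⊆ ℝ^n be linear hyperplanes and let H = H₁ ∪ ⋯ ∪ H_k. Let v₁, …, v_k ∈ S^{n-1} be linearly independent unit vectors and C = cone(v₁, …, v_k), and suppose that for all i, j ∈ {1,…,k}: d(vᵢ, Hⱼ) ≥ h > 0 if i = j, and vᵢ ∈ Hⱼ if i ≠ j. Let X be a random point distributed uniformly on C ∩ B^n (with respect to normalized k-dimensional Hausdorff measure). Then E[d(X, H)] ≥ h/(8k²). -/

import Mathlib

open MeasureTheory

noncomputable section

/-- The simplicial cone generated by the vectors `v 0, …, v (k-1)`. -/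
def simplicialCone {n k : ℕ} (v : Fin k → EuclideanSpace ℝ (Fin n)) :
    Set (EuclideanSpace ℝ (Fin n)) :=
  {x | ∃ lam : Fin k → ℝ, (∀ i, 0 ≤ lam i) ∧ x = ∑ i, lam i • v i}

/-- The uniform probability measure on a set `s`, with respect to the
`d`-dimensional Hausdorff measure. -/
def uniformOn {n : ℕ} (d : ℝ) (s : Set (EuclideanSpace ℝ (Fin n))) :
    Measure (EuclideanSpace ℝ (Fin n)) :=
  ((μH[d] : Measure (EuclideanSpace ℝ (Fin n))) s)⁻¹ •
    (μH[d] : Measure (EuclideanSpace ℝ (Fin n))).restrict s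



open Metric
open scoped Pointwise NNReal ENNReal

section AuxLemmas

variable {E : Type*} [NormedAddCommGroup E] [NormedSpace ℝ E]

lemma aux_infDist_add_mem (H : Submodule ℝ E) {w : E} (hw : w ∈ H) (y : E) :
    infDist (y + w) (H : Set E) = infDist y (H : Set E) := by
  have hiso : Isometry (fun z : E => z + w) :=
    Isometry.of_dist_eq fun a b => by simp [dist_eq_norm]
  have himg : (fun z : E => z + w) '' (H : Set E) = (H : Set E) := by
    ext z
    constructor
    · rintro ⟨u, hu, rfl⟩; exact H.add_mem hu hw
    · intro hz
      exact ⟨z - w, H.sub_mem hz hw, by simp⟩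
  have := Metric.infDist_image (x := y) (t := (H : Set E)) hiso
  simpa [himg] using this

lemma aux_infDist_smul (H : Submodule ℝ E) (c : ℝ) (y : E) :
    infDist (c • y) (H : Set E) = |c| * infDist y (H : Set E) := by
  rcases eq_or_ne c 0 with rfl | hc
  · simp [Metric.infDist_zero_of_mem H.zero_mem]
  · have hset : c • (H : Set E) = (H : Set E) := by
      ext z
      constructor
      · rintro ⟨u, hu, rfl⟩; exact H.smul_mem c hu
      · intro hz
        exact ⟨c⁻¹ • z, H.smul_mem _ hz, by simp [smul_smul, mul_inv_cancel₀ hc]⟩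
    calc infDist (c • y) (H : Set E) = infDist (c • y) (c • (H : Set E)) := by rw [hset]
      _ = ‖c‖ * infDist y (H : Set E) := infDist_smul₀ hc _ _
      _ = |c| * infDist y (H : Set E) := by rw [Real.norm_eq_abs]

lemma aux_cone_dist {n k : ℕ} (H : Fin k → Submodule ℝ (EuclideanSpace ℝ (Fin n)))
    (v : Fin k → EuclideanSpace ℝ (Fin n))
    (hmem : ∀ i j, i ≠ j → v i ∈ H j) (lam : Fin k → ℝ) (j : Fin k) :
    infDist (∑ i, lam i • v i) ((H j : Set (EuclideanSpace ℝ (Fin n))))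
      = |lam j| * infDist (v j) ((H j : Set (EuclideanSpace ℝ (Fin n)))) := by
  have hw : (∑ i ∈ Finset.univ.erase j, lam i • v i) ∈ H j :=
    Submodule.sum_mem _ fun i hi => (H j).smul_mem _ (hmem i j (Finset.ne_of_mem_erase hi))
  have hsplit : ∑ i, lam i • v i
      = lam j • v j + ∑ i ∈ Finset.univ.erase j, lam i • v i :=
    (Finset.add_sum_erase _ _ (Finset.mem_univ j)).symm
  rw [hsplit, aux_infDist_add_mem _ hw, aux_infDist_smul]

end AuxLemmas

set_option maxHeartbeats 1000000 in
/-- let `H = H₁ ∪ ⋯ ∪ H_k` be a union of linear hyperplanes and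
`C = cone(v₁,…,v_k)` with the `vᵢ` linearly independent unit vectors satisfying
`d(vᵢ, Hᵢ) ≥ h > 0` and `vᵢ ∈ Hⱼ` for `i ≠ j`.  If `X` is uniform on `C ∩ Bⁿ`
(normalized `k`-dimensional Hausdorff measure), then `E[d(X,H)] ≥ h/(8k²)`. -/
theorem statement14 (n k : ℕ) (hk : 1 ≤ k)
    (H : Fin k → Submodule ℝ (EuclideanSpace ℝ (Fin n)))
    (hH : ∀ i, Module.finrank ℝ (H i) = n - 1)
    (v : Fin k → EuclideanSpace ℝ (Fin n))
    (hunit : ∀ i, ‖v i‖ = 1) (hind : LinearIndependent ℝ v)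
    (h : ℝ) (hpos : 0 < h)
    (hdist : ∀ i, h ≤ Metric.infDist (v i) (H i : Set (EuclideanSpace ℝ (Fin n))))
    (hmem : ∀ i j, i ≠ j → v i ∈ H j) :
    h / (8 * (k : ℝ) ^ 2) ≤
      ∫ x, (⨅ i, Metric.infDist x (H i : Set (EuclideanSpace ℝ (Fin n))))
        ∂(uniformOn (k : ℝ)
          (simplicialCone v ∩ Metric.closedBall (0 : EuclideanSpace ℝ (Fin n)) 1)) := by
  classical
  haveI : Nonempty (Fin k) := ⟨⟨0, hk⟩⟩
  have hk0 : (0:ℝ) < k := by exact_mod_cast hk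
  have hk1 : (1:ℝ) ≤ k := by exact_mod_cast hk
  set ε : ℝ := 1 / (2 * k) with hεdef
  have hε0 : 0 < ε := by positivity
  have hεhalf : ε ≤ 1/2 := by
    rw [hεdef]
    rw [div_le_div_iff₀ (by positivity) (by norm_num)]
    nlinarith
  have hε1 : ε < 1 := lt_of_le_of_lt hεhalf (by norm_num)
  -- the linear parametrization
  set T : (Fin k → ℝ) → (EuclideanSpace ℝ (Fin n)) := fun lam => ∑ i, lam i • v i with hTdef
  set s : Set (EuclideanSpace ℝ (Fin n)) := simplicialCone v ∩ Metric.closedBall (0 : (EuclideanSpace ℝ (Fin n))) 1 with hsdef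
  set f : (EuclideanSpace ℝ (Fin n)) → ℝ := fun x => ⨅ i, Metric.infDist x ((H i : Set (EuclideanSpace ℝ (Fin n)))) with hfdef
  -- basic facts about f
  have hf_nonneg : ∀ x, 0 ≤ f x := by
    intro x
    exact Real.iInf_nonneg fun i => Metric.infDist_nonneg
  have hf_le : ∀ x j, f x ≤ Metric.infDist x ((H j : Set (EuclideanSpace ℝ (Fin n)))) := by
    intro x j
    exact ciInf_le ⟨0, by rintro - ⟨i, rfl⟩; exact Metric.infDist_nonneg⟩ j
  have hf_cont : Continuous f := by
    have hrw : f = fun x => Finset.univ.inf' Finset.univ_nonempty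
        (fun i => Metric.infDist x ((H i : Set (EuclideanSpace ℝ (Fin n))))) := by
      funext x
      rw [hfdef]
      exact (Finset.inf'_univ_eq_ciInf _).symm
    rw [hrw]
    exact Continuous.finset_inf'_apply Finset.univ_nonempty
      (fun i _ => continuous_infDist_pt _)
  -- distance formula on the cone
  have hdf : ∀ (lam : Fin k → ℝ) (j : Fin k),
      Metric.infDist (T lam) ((H j : Set (EuclideanSpace ℝ (Fin n)))) = |lam j| * Metric.infDist (v j) ((H j : Set (EuclideanSpace ℝ (Fin n)))) :=
    fun lam j => aux_cone_dist H v hmem lam j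
  -- norm bound for T
  have hTnorm : ∀ lam : Fin k → ℝ, ‖T lam‖ ≤ ∑ i, |lam i| := by
    intro lam
    calc ‖∑ i, lam i • v i‖ ≤ ∑ i, ‖lam i • v i‖ := norm_sum_le _ _
      _ = ∑ i, |lam i| := by simp [norm_smul, hunit]
  have hTcont : Continuous T := by
    apply continuous_finset_sum
    intro i _
    exact (continuous_apply i).smul continuous_const
  -- the parameter set
  set S : Set (Fin k → ℝ) := {lam | (∀ i, 0 ≤ lam i) ∧ ‖T lam‖ ≤ 1} with hSdef
  have hsT : s = T '' S := by
    ext x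
    constructor
    · rintro ⟨⟨lam, hlam, rfl⟩, hx⟩
      exact ⟨lam, ⟨hlam, by simpa [hTdef, mem_closedBall, dist_zero_right] using hx⟩, rfl⟩
    · rintro ⟨lam, ⟨hlam, hnorm⟩, rfl⟩
      exact ⟨⟨lam, hlam, rfl⟩, by simpa [mem_closedBall, dist_zero_right] using hnorm⟩
  -- bound on parameters
  have hSbound : ∀ lam ∈ S, ∀ j, lam j ≤ 1 / h := by
    intro lam hlam j
    have h1 : h * lam j ≤ |lam j| * Metric.infDist (v j) ((H j : Set (EuclideanSpace ℝ (Fin n)))) := by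
      rw [abs_of_nonneg (hlam.1 j)]
      nlinarith [hdist j, hlam.1 j]
    have h2 : |lam j| * Metric.infDist (v j) ((H j : Set (EuclideanSpace ℝ (Fin n)))) ≤ 1 := by
      rw [← hdf lam j]
      calc Metric.infDist (T lam) ((H j : Set (EuclideanSpace ℝ (Fin n)))) ≤ dist (T lam) 0 :=
            Metric.infDist_le_dist_of_mem (H j).zero_mem
        _ = ‖T lam‖ := by simp
        _ ≤ 1 := hlam.2
    rw [le_div_iff₀ hpos, mul_comm]
    exact h1.trans h2
  -- compactness
  have hSbdd : Bornology.IsBounded S := by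
    apply (Metric.isBounded_closedBall (x := (0 : Fin k → ℝ)) (r := 1/h)).subset
    intro lam hlam
    rw [Metric.mem_closedBall, dist_zero_right]
    rw [pi_norm_le_iff_of_nonneg (by positivity)]
    intro i
    rw [Real.norm_eq_abs, abs_of_nonneg (hlam.1 i)]
    exact hSbound lam hlam i
  have hScompact : IsCompact S := by
    have hclosed : IsClosed S := by
      have h1 : IsClosed {lam : Fin k → ℝ | ∀ i, 0 ≤ lam i} := by
        have : {lam : Fin k → ℝ | ∀ i, 0 ≤ lam i} = ⋂ i, {lam : Fin k → ℝ | 0 ≤ lam i} := by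
          ext lam; simp
        rw [this]
        exact isClosed_iInter fun i => isClosed_le continuous_const (continuous_apply i)
      have h2 : IsClosed {lam : Fin k → ℝ | ‖T lam‖ ≤ 1} :=
        isClosed_le (hTcont.norm) continuous_const
      have : S = {lam : Fin k → ℝ | ∀ i, 0 ≤ lam i} ∩ {lam : Fin k → ℝ | ‖T lam‖ ≤ 1} := by
        ext lam; simp [hSdef, Set.mem_setOf_eq, Set.mem_inter_iff]
      rw [this]; exact h1.inter h2
    exact Metric.isCompact_of_isClosed_isBounded hclosed hSbdd
  have hscompact : IsCompact s := by
    rw [hsT]; exact hScompact.image hTcont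
  have hsmeas : MeasurableSet s := hscompact.measurableSet
  set m : ENNReal := μH[(k:ℝ)] s with hmdef
  have hpi : (μH[(k:ℝ)] : Measure (Fin k → ℝ)) = volume := by
    have := hausdorffMeasure_pi_real (ι := Fin k)
    rwa [Fintype.card_fin] at this
  have hTlip : LipschitzWith (k : ℝ≥0) T := by
    apply LipschitzWith.of_dist_le_mul
    intro a b
    have hdiff : T a - T b = T (a - b) := by
      rw [hTdef]
      simp [sub_smul, Finset.sum_sub_distrib]
    calc dist (T a) (T b) = ‖T a - T b‖ := dist_eq_norm _ _
      _ = ‖T (a - b)‖ := by rw [hdiff]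
      _ ≤ ∑ i, abs ((a - b) i) := hTnorm _
      _ ≤ ∑ _i : Fin k, dist a b := by
          apply Finset.sum_le_sum
          intro i _
          have := dist_le_pi_dist a b i
          simpa [Real.dist_eq] using this
      _ = (k : ℝ) * dist a b := by simp [mul_comm]
  have hfin : m ≠ ⊤ := by
    have himg : μH[(k:ℝ)] s ≤ ((k:ℝ≥0) : ℝ≥0∞) ^ (k:ℝ) * μH[(k:ℝ)] S := by
      rw [hsT]
      exact hTlip.hausdorffMeasure_image_le (by positivity) S
    have hSvol : μH[(k:ℝ)] S < ⊤ := by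
      rw [hpi]
      exact hSbdd.measure_lt_top
    have hRHS : ((k:ℝ≥0) : ℝ≥0∞) ^ (k:ℝ) * μH[(k:ℝ)] S < ⊤ := by
      apply ENNReal.mul_lt_top _ hSvol
      exact ENNReal.rpow_lt_top_of_nonneg (by positivity) (by simp)
    intro htop
    rw [hmdef] at htop
    rw [htop] at himg
    exact (lt_irrefl _ (lt_of_le_of_lt (le_trans le_top himg) hRHS))
  have hm0 : m ≠ 0 := by
    set F : EuclideanSpace ℝ (Fin n) → (Fin k → ℝ) :=
      fun x i => (inner ℝ (v i) x : ℝ) with hFdef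
    have hFlip : LipschitzWith 1 F := by
      apply LipschitzWith.of_dist_le_mul
      intro a b
      rw [dist_pi_le_iff (by positivity)]
      intro i
      have : dist (F a i) (F b i) = |(inner ℝ (v i) a : ℝ) - (inner ℝ (v i) b : ℝ)| := by
        rw [hFdef, Real.dist_eq]
      rw [this]
      calc |(inner ℝ (v i) a : ℝ) - (inner ℝ (v i) b : ℝ)|
          = |(inner ℝ (v i) (a - b) : ℝ)| := by rw [inner_sub_right]
        _ ≤ ‖v i‖ * ‖a - b‖ := abs_real_inner_le_norm _ _
        _ = ↑(1:ℝ≥0) * dist a b := by rw [hunit, dist_eq_norm]; simp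
    set Tl : (Fin k → ℝ) →ₗ[ℝ] EuclideanSpace ℝ (Fin n) :=
      { toFun := T
        map_add' := by
          intro a b
          simp only [hTdef]
          simp [add_smul, Finset.sum_add_distrib]
        map_smul' := by
          intro cc a
          simp only [hTdef]
          simp [Finset.smul_sum, mul_smul] } with hTldef
    set Fl : EuclideanSpace ℝ (Fin n) →ₗ[ℝ] (Fin k → ℝ) :=
      { toFun := F
        map_add' := by
          intro a b; funext i; simp only [hFdef]; simp [inner_add_right]
        map_smul' := by
          intro cc a; funext i; simp only [hFdef]; simp [inner_smul_right] } with hFldef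
    set G : (Fin k → ℝ) →ₗ[ℝ] (Fin k → ℝ) := Fl.comp Tl with hGdef
    have hGapp : ∀ lam : Fin k → ℝ, G lam = F (T lam) := fun lam => rfl
    have hTinj : ∀ lam : Fin k → ℝ, T lam = 0 → lam = 0 := by
      intro lam hl
      have h0 : ∑ i, lam i • v i = 0 := by rw [hTdef] at hl; exact hl
      have := Fintype.linearIndependent_iff.mp hind lam h0
      funext i; exact this i
    have hGinj : ∀ lam : Fin k → ℝ, G lam = 0 → lam = 0 := by
      intro lam hl
      have hinner : ∀ j, (inner ℝ (v j) (T lam) : ℝ) = 0 := by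
        intro j
        have := congrFun hl j
        rw [hGapp] at this
        simpa [hFdef] using this
      have hself : (inner ℝ (T lam) (T lam) : ℝ) = 0 := by
        have hexp : T lam = ∑ i, lam i • v i := by rw [hTdef]
        calc (inner ℝ (T lam) (T lam) : ℝ)
            = ∑ i, lam i * (inner ℝ (v i) (T lam) : ℝ) := by
              conv_lhs => rw [hexp]
              rw [sum_inner]
              refine Finset.sum_congr rfl fun i _ => ?_
              rw [real_inner_smul_left]
          _ = 0 := by simp [hinner]
      exact hTinj lam (by rwa [inner_self_eq_zero] at hself)
    have hGdet : LinearMap.det G ≠ 0 := by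
      intro h0
      have hlt := LinearMap.bot_lt_ker_of_det_eq_zero h0
      obtain ⟨lam, hlammem, hlamne⟩ := SetLike.exists_of_lt hlt
      exact hlamne ((Submodule.mem_bot ℝ).mpr (hGinj lam (LinearMap.mem_ker.mp hlammem)))
    set Bx : Set (Fin k → ℝ) := Set.univ.pi (fun _ => Set.Icc (0:ℝ) (1/k)) with hBxdef
    have hBxS : Bx ⊆ S := by
      intro lam hlam
      have hmemi : ∀ i, lam i ∈ Set.Icc (0:ℝ) (1/k) := fun i => hlam i (Set.mem_univ i)
      refine ⟨fun i => (hmemi i).1, ?_⟩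
      calc ‖T lam‖ ≤ ∑ i, abs (lam i) := hTnorm lam
        _ ≤ ∑ _i : Fin k, (1/k : ℝ) := by
            apply Finset.sum_le_sum
            intro i _
            rw [abs_of_nonneg (hmemi i).1]; exact (hmemi i).2
        _ = 1 := by
            rw [Finset.sum_const, Finset.card_univ, Fintype.card_fin, nsmul_eq_mul]
            field_simp
    have hBxvol : 0 < volume Bx := by
      rw [hBxdef, volume_pi_pi]
      have : ∀ _i : Fin k, volume (Set.Icc (0:ℝ) (1/k)) = ENNReal.ofReal (1/k) := by
        intro i; rw [Real.volume_Icc]; norm_num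
      rw [Finset.prod_congr rfl (fun i _ => this i), Finset.prod_const]
      apply ENNReal.pow_pos
      rw [ENNReal.ofReal_pos]
      positivity
    have himage : volume (G '' Bx) = ENNReal.ofReal |LinearMap.det G| * volume Bx :=
      MeasureTheory.Measure.addHaar_image_linearMap (μ := volume) G Bx
    have hGsub : G '' Bx ⊆ F '' s := by
      rintro y ⟨lam, hlam, rfl⟩
      refine ⟨T lam, ?_, (hGapp lam).symm⟩
      rw [hsT]
      exact ⟨lam, hBxS hlam, rfl⟩
    have hFs : volume (F '' s) ≤ m := by
      have himg := hFlip.hausdorffMeasure_image_le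
        (show (0:ℝ) ≤ (k:ℝ) by positivity) s
      rw [← hpi]
      simpa [hmdef, ENNReal.one_rpow] using himg
    intro h0
    have hposvol : (0:ℝ≥0∞) < volume (G '' Bx) := by
      rw [himage]
      exact ENNReal.mul_pos (ENNReal.ofReal_pos.mpr (abs_pos.mpr hGdet)).ne' hBxvol.ne'
    have hle : volume (G '' Bx) ≤ m := le_trans (measure_mono hGsub) hFs
    rw [h0] at hle
    exact hposvol.ne' (le_antisymm hle zero_le)
  -- the contraction map
  set c : (EuclideanSpace ℝ (Fin n)) := (ε/k) • ∑ i, v i with hcdef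
  set Φ : (EuclideanSpace ℝ (Fin n)) → (EuclideanSpace ℝ (Fin n)) := fun x => (1-ε) • x + c with hΦdef
  have hΦcont : Continuous Φ := ((continuous_id.const_smul (1-ε)).add continuous_const)
  have hEcompact : IsCompact (Φ '' s) := hscompact.image hΦcont
  have hEmeas : MeasurableSet (Φ '' s) := hEcompact.measurableSet
  -- image properties
  have h1ε : (0:ℝ) < 1 - ε := by linarith
  have hsumv : ‖∑ i, v i‖ ≤ (k:ℝ) := by
    calc ‖∑ i, v i‖ ≤ ∑ i, ‖v i‖ := norm_sum_le _ _
      _ = (k:ℝ) := by simp [hunit]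
  have hΦT : ∀ lam : Fin k → ℝ, Φ (T lam) = T (fun i => (1-ε) * lam i + ε/k) := by
    intro lam
    simp only [hΦdef, hTdef, hcdef]
    rw [Finset.smul_sum, Finset.smul_sum, ← Finset.sum_add_distrib]
    refine Finset.sum_congr rfl fun i _ => ?_
    rw [smul_smul, ← add_smul]
  have hΦsub : Φ '' s ⊆ s := by
    rintro y ⟨x, hx, rfl⟩
    have hxS : x ∈ T '' S := by rw [← hsT]; exact hx
    obtain ⟨lam, hlamS, rfl⟩ := hxS
    constructor
    · refine ⟨fun i => (1-ε) * lam i + ε/k, fun i =>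
        add_nonneg (mul_nonneg h1ε.le (hlamS.1 i)) (by positivity), ?_⟩
      rw [hΦT lam]
    · rw [Metric.mem_closedBall, dist_zero_right]
      have hx1 : ‖T lam‖ ≤ 1 := hlamS.2
      have hnc : ‖c‖ ≤ (ε/k) * k := by
        rw [hcdef, norm_smul, Real.norm_eq_abs, abs_of_nonneg (by positivity)]
        exact mul_le_mul_of_nonneg_left hsumv (by positivity)
      calc ‖Φ (T lam)‖ = ‖(1-ε) • T lam + c‖ := by rw [hΦdef]
        _ ≤ ‖(1-ε) • T lam‖ + ‖c‖ := norm_add_le _ _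
        _ ≤ (1-ε) * 1 + (ε/k) * k := by
            apply add_le_add _ hnc
            rw [norm_smul, Real.norm_eq_abs, abs_of_nonneg h1ε.le]
            exact mul_le_mul_of_nonneg_left hx1 h1ε.le
        _ = 1 := by rw [div_mul_cancel₀ _ hk0.ne']; ring
  have hΦdist : ∀ x ∈ Φ '' s, ε * h / k ≤ f x := by
    rintro y ⟨x, hx, rfl⟩
    have hxS : x ∈ T '' S := by rw [← hsT]; exact hx
    obtain ⟨lam, hlamS, rfl⟩ := hxS
    rw [hΦT lam]
    have : f (T fun i => (1-ε) * lam i + ε/k)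
        = ⨅ j, Metric.infDist (T fun i => (1-ε) * lam i + ε/k)
            ((H j : Set (EuclideanSpace ℝ (Fin n)))) := by rw [hfdef]
    rw [this]
    apply le_ciInf
    intro j
    rw [hdf]
    have hco : ε/k ≤ |(1-ε) * lam j + ε/k| := by
      rw [abs_of_nonneg (add_nonneg (mul_nonneg h1ε.le (hlamS.1 j)) (by positivity))]
      nlinarith [hlamS.1 j]
    calc ε * h / k = (ε/k) * h := by ring
      _ ≤ |(1-ε) * lam j + ε/k| * Metric.infDist (v j) ((H j : Set (EuclideanSpace ℝ (Fin n)))) :=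
          mul_le_mul hco (hdist j) hpos.le (abs_nonneg _)
  have hΦmeasure : ENNReal.ofReal ((1-ε)^k) * m ≤ μH[(k:ℝ)] (Φ '' s) := by
    set Ψ : EuclideanSpace ℝ (Fin n) → EuclideanSpace ℝ (Fin n) :=
      fun y => (1-ε)⁻¹ • (y - c) with hΨdef
    have hΨlip : LipschitzWith ((1-ε)⁻¹).toNNReal Ψ := by
      apply LipschitzWith.of_dist_le_mul
      intro a b
      have hab : Ψ a - Ψ b = (1-ε)⁻¹ • (a - b) := by
        simp only [hΨdef]
        rw [← smul_sub]
        congr 1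
        abel
      rw [dist_eq_norm, hab, norm_smul, Real.norm_eq_abs, abs_of_nonneg (by positivity),
        Real.coe_toNNReal _ (by positivity), ← dist_eq_norm]
    have hΨΦ : ∀ x, Ψ (Φ x) = x := by
      intro x
      simp only [hΨdef, hΦdef]
      rw [add_sub_cancel_right, smul_smul, inv_mul_cancel₀ h1ε.ne', one_smul]
    have hsub2 : s ⊆ Ψ '' (Φ '' s) := fun x hx => ⟨Φ x, Set.mem_image_of_mem _ hx, hΨΦ x⟩
    have hμ1 : m ≤ ((((1-ε)⁻¹).toNNReal : ℝ≥0) : ℝ≥0∞) ^ (k:ℝ) * μH[(k:ℝ)] (Φ '' s) :=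
      le_trans (measure_mono hsub2) (hΨlip.hausdorffMeasure_image_le (by positivity) _)
    have hconst : ENNReal.ofReal ((1-ε)^k) * ((((1-ε)⁻¹).toNNReal : ℝ≥0) : ℝ≥0∞) ^ (k:ℝ) = 1 := by
      have hcoe : ((((1-ε)⁻¹).toNNReal : ℝ≥0) : ℝ≥0∞) = ENNReal.ofReal ((1-ε)⁻¹) := rfl
      rw [hcoe, ENNReal.ofReal_rpow_of_pos (by positivity), ← ENNReal.ofReal_mul (by positivity),
        Real.rpow_natCast, ← mul_pow, mul_inv_cancel₀ h1ε.ne', one_pow, ENNReal.ofReal_one]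
    calc ENNReal.ofReal ((1-ε)^k) * m
        ≤ ENNReal.ofReal ((1-ε)^k)
            * (((((1-ε)⁻¹).toNNReal : ℝ≥0) : ℝ≥0∞) ^ (k:ℝ) * μH[(k:ℝ)] (Φ '' s)) :=
          mul_le_mul_right hμ1 _
      _ = (ENNReal.ofReal ((1-ε)^k) * ((((1-ε)⁻¹).toNNReal : ℝ≥0) : ℝ≥0∞) ^ (k:ℝ))
            * μH[(k:ℝ)] (Φ '' s) := (mul_assoc _ _ _).symm
      _ = 1 * μH[(k:ℝ)] (Φ '' s) := by rw [hconst]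
      _ = μH[(k:ℝ)] (Φ '' s) := one_mul _
  -- integration
  set ν : Measure (EuclideanSpace ℝ (Fin n)) := (μH[(k:ℝ)] : Measure (EuclideanSpace ℝ (Fin n))).restrict s with hνdef
  haveI : IsFiniteMeasure ν := by
    constructor
    rw [hνdef, Measure.restrict_apply_univ]
    exact hfin.lt_top
  have hf_int : Integrable f ν := by
    apply Integrable.mono' (integrable_const (1:ℝ)) hf_cont.aestronglyMeasurable
    rw [hνdef, ae_restrict_iff' hsmeas]
    filter_upwards with x hx
    rw [Real.norm_of_nonneg (hf_nonneg x)]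
    calc f x ≤ Metric.infDist x ((H ⟨0, hk⟩ : Set (EuclideanSpace ℝ (Fin n)))) := hf_le x _
      _ ≤ dist x 0 := Metric.infDist_le_dist_of_mem (H _).zero_mem
      _ ≤ 1 := by simpa [mem_closedBall] using hx.2
  set g : (EuclideanSpace ℝ (Fin n)) → ℝ := (Φ '' s).indicator (fun _ => ε * h / k) with hgdef
  have hg_int : Integrable g ν := (integrable_const _).indicator hEmeas
  have hgf : g ≤ f := by
    intro x
    rw [hgdef]
    by_cases hx : x ∈ Φ '' s
    · simpa [Set.indicator_of_mem hx] using hΦdist x hx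
    · simpa [Set.indicator_of_notMem hx] using hf_nonneg x
  have hg_val : ∫ x, g x ∂ν = (ν (Φ '' s)).toReal * (ε * h / k) := by
    rw [hgdef, integral_indicator_const _ hEmeas]
    simp [smul_eq_mul, Measure.real]
  have hνE : ν (Φ '' s) = μH[(k:ℝ)] (Φ '' s) := by
    rw [hνdef, Measure.restrict_apply' hsmeas, Set.inter_eq_self_of_subset_left hΦsub]
  -- putting it together
  have hint : (1-ε)^k * m.toReal * (ε * h / k) ≤ ∫ x, f x ∂ν := by
    have h1 : ∫ x, g x ∂ν ≤ ∫ x, f x ∂ν := integral_mono hg_int hf_int hgf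
    have h2 : (1-ε)^k * m.toReal ≤ (ν (Φ '' s)).toReal := by
      rw [hνE]
      have hle : ENNReal.ofReal ((1-ε)^k) * m ≤ μH[(k:ℝ)] (Φ '' s) := hΦmeasure
      have hfin' : μH[(k:ℝ)] (Φ '' s) ≠ ⊤ :=
        ne_top_of_le_ne_top hfin (measure_mono hΦsub)
      have := ENNReal.toReal_mono hfin' hle
      rwa [ENNReal.toReal_mul, ENNReal.toReal_ofReal (pow_nonneg (by linarith) k)] at this
    calc (1-ε)^k * m.toReal * (ε * h / k) ≤ (ν (Φ '' s)).toReal * (ε * h / k) := by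
          apply mul_le_mul_of_nonneg_right h2 (by positivity)
      _ = ∫ x, g x ∂ν := hg_val.symm
      _ ≤ ∫ x, f x ∂ν := h1
  -- final computation
  have hLHS : ∫ x, f x ∂(uniformOn (k:ℝ) s) = m.toReal⁻¹ * ∫ x, f x ∂ν := by
    rw [uniformOn, integral_smul_measure, ← hνdef, ← hmdef, ENNReal.toReal_inv, smul_eq_mul]
  show h / (8 * (k : ℝ) ^ 2) ≤ ∫ x, f x ∂(uniformOn (k:ℝ) s)
  rw [hLHS]
  have hmtR : 0 < m.toReal := ENNReal.toReal_pos hm0 hfin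
  have hber : (1/2 : ℝ) ≤ (1-ε)^k := by
    have := one_add_mul_le_pow (a := -ε) (by nlinarith) k
    have heq : 1 + (k:ℝ) * (-ε) = 1/2 := by
      rw [hεdef]; field_simp; ring
    rw [heq] at this
    rw [← sub_eq_add_neg] at this; exact this
  have hfinal : h / (8 * (k:ℝ)^2) ≤ (1-ε)^k * (ε * h / k) := by
    have : (1/2 : ℝ) * (ε * h / k) ≤ (1-ε)^k * (ε * h / k) := by
      apply mul_le_mul_of_nonneg_right hber (by positivity)
    have heq2 : (1/2 : ℝ) * (ε * h / k) = h / (4 * (k:ℝ)^2) := by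
      rw [hεdef]; field_simp
      ring
    calc h / (8 * (k:ℝ)^2) ≤ h / (4 * (k:ℝ)^2) := by
          rw [div_le_div_iff₀ (by positivity) (by positivity)]
          nlinarith [sq_nonneg ((k:ℝ)), hpos.le]
      _ = (1/2) * (ε * h / k) := heq2.symm
      _ ≤ (1-ε)^k * (ε * h / k) := this
  calc h / (8 * (k:ℝ)^2) ≤ (1-ε)^k * (ε * h / k) := hfinal
    _ = m.toReal⁻¹ * ((1-ε)^k * m.toReal * (ε * h / k)) := by
        field_simp
    _ ≤ m.toReal⁻¹ * ∫ x, f x ∂ν := by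
        apply mul_le_mul_of_nonneg_left hint (by positivity)
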